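/- Let S be a nonempty finite set and let m, k be real-valued functions on the nonempty subsets of S. Suppose that for every nonempty T ⊆ S, m(T) = Σ_{π ∈ Π(T)} Π_{B ∈ π} k(B), where Π(T) is the set of partitions of T. Then for every nonempty T ⊆ S, k(T) = Σ_{π ∈ Π(T)} (−1)^{|π| − 1} (|π| − 1)! · Π_{B ∈ π} m(B), where |π| denotes the number of blocks of π. -/

import Mathlib

open Finset

namespace MCaux

variable {α : Type*} [DecidableEq α]

instance instDecLE {T : Finset α} : @DecidableRel (Finpartition T) (Finpartition T) (· ≤ ·) :=
  fun P Q => decidable_of_iff (∀ b ∈ P.parts, ∃ c ∈ Q.parts, b ≤ c) Iff.rfl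

/-- Remove a part from a finpartition. -/
def pdel {E : Finset α} (ρ : Finpartition E) {C : Finset α} (hC : C ∈ ρ.parts) :
    Finpartition (E \ C) :=
  ρ.ofSubset (erase_subset C ρ.parts) (by
    have hdisj : Disjoint C ((ρ.parts.erase C).sup id) :=
      ρ.supIndep (erase_subset C ρ.parts) hC (notMem_erase _ _)
    have hunion : C ∪ (ρ.parts.erase C).sup id = E := by
      conv_rhs => rw [← ρ.sup_parts, ← insert_erase hC]
      rw [sup_insert]
      rfl
    have h2 := union_sdiff_cancel_left hdisj
    rw [hunion] at h2
    exact h2.symm)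

@[simp] lemma pdel_parts {E : Finset α} (ρ : Finpartition E) {C : Finset α}
    (hC : C ∈ ρ.parts) : (pdel ρ hC).parts = ρ.parts.erase C := rfl

/-- Add a block to a finpartition of the complement. -/
def pext {E C : Finset α} (hC : C.Nonempty) (hCE : C ⊆ E) (ρ : Finpartition (E \ C)) :
    Finpartition E :=
  ρ.extend (by simpa using hC.ne_empty) sdiff_disjoint
    (by rw [sup_eq_union, sdiff_union_of_subset hCE])

@[simp] lemma pext_parts {E C : Finset α} (hC : C.Nonempty) (hCE : C ⊆ E)
    (ρ : Finpartition (E \ C)) : (pext hC hCE ρ).parts = insert C ρ.parts := rfl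

lemma not_mem_sdiff_partition {E C : Finset α} (hC : C.Nonempty) (ρ : Finpartition (E \ C)) :
    C ∉ ρ.parts := by
  intro h
  obtain ⟨x, hx⟩ := hC
  exact (mem_sdiff.1 (ρ.le h hx)).2 hx

lemma pext_pdel {E : Finset α} (ρ : Finpartition E) {C : Finset α} (hC : C ∈ ρ.parts)
    (h1 : C.Nonempty) (h2 : C ⊆ E) : pext h1 h2 (pdel ρ hC) = ρ := by
  apply Finpartition.ext
  rw [pext_parts, pdel_parts, insert_erase hC]

lemma pdel_pext {E C : Finset α} (hC : C.Nonempty) (hCE : C ⊆ E) (ρ : Finpartition (E \ C))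
    (h' : C ∈ (pext hC hCE ρ).parts) : pdel (pext hC hCE ρ) h' = ρ := by
  apply Finpartition.ext
  rw [pdel_parts, pext_parts, erase_insert (not_mem_sdiff_partition hC ρ)]

lemma pdel_heq {E : Finset α} (P : Finpartition E) {C C' : Finset α} (hC : C ∈ P.parts)
    (hC' : C' ∈ P.parts) (h : C = C') : HEq (pdel P hC) (pdel P hC') := by
  subst h; rfl

lemma sum_marked (E : Finset α) (g : ℕ → ℝ) :
    ∑ ρ : Finpartition E, (ρ.parts.card : ℝ) * g ρ.parts.card
      = ∑ C ∈ E.powerset.erase ∅, ∑ ρ : Finpartition (E \ C), g (ρ.parts.card + 1) := by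
  have l1 : ∀ ρ : Finpartition E, (ρ.parts.card : ℝ) * g ρ.parts.card
      = ∑ C ∈ ρ.parts, g ρ.parts.card := by
    intro ρ; rw [Finset.sum_const, nsmul_eq_mul]
  rw [Finset.sum_congr rfl fun ρ _ => l1 ρ,
    ← Finset.sum_sigma (univ : Finset (Finpartition E)) (fun ρ => ρ.parts)
      (fun p => g p.1.parts.card),
    ← Finset.sum_sigma (E.powerset.erase ∅) (fun C => (univ : Finset (Finpartition (E \ C))))
      (fun p => g (p.2.parts.card + 1))]
  refine Finset.sum_bij' (fun p hp => ⟨p.2, pdel p.1 ?_⟩)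
    (fun q hq => ⟨pext ?_ ?_ q.2, q.1⟩) ?_ ?_ ?_ ?_ ?_
  · exact (Finset.mem_sigma.1 hp).2
  · -- q.1 nonempty
    have := (Finset.mem_sigma.1 hq).1
    rw [mem_erase] at this
    exact nonempty_iff_ne_empty.2 this.1
  · have := (Finset.mem_sigma.1 hq).1
    rw [mem_erase, mem_powerset] at this
    exact this.2
  · intro p hp
    have h2 := (Finset.mem_sigma.1 hp).2
    rw [Finset.mem_sigma, mem_erase, mem_powerset]
    exact ⟨⟨nonempty_iff_ne_empty.1 (Finpartition.nonempty_of_mem_parts _ h2), p.1.le h2⟩,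
      mem_univ _⟩
  · intro q hq
    rw [Finset.mem_sigma]
    refine ⟨mem_univ _, ?_⟩
    rw [pext_parts]
    exact mem_insert_self _ _
  · intro p hp
    have h2 := (Finset.mem_sigma.1 hp).2
    exact Sigma.ext (pext_pdel p.1 h2 (Finpartition.nonempty_of_mem_parts _ h2) (p.1.le h2))
      (HEq.refl _)
  · intro q hq
    have hm := (Finset.mem_sigma.1 hq).1
    rw [mem_erase, mem_powerset] at hm
    exact Sigma.ext rfl (heq_of_eq (pdel_pext (nonempty_iff_ne_empty.2 hm.1) hm.2 q.2
      (by rw [pext_parts]; exact mem_insert_self _ _)))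
  · intro p hp
    have h2 := (Finset.mem_sigma.1 hp).2
    simp only [pdel_parts]
    rw [Finset.card_erase_add_one h2]

lemma sum_part_at (E : Finset α) (a : α) (ha : a ∈ E) (g : ℕ → ℝ) :
    ∑ ρ : Finpartition E, g ρ.parts.card
      = ∑ C ∈ E.powerset.filter (a ∈ ·), ∑ ρ : Finpartition (E \ C), g (ρ.parts.card + 1) := by
  rw [← Finset.sum_sigma (E.powerset.filter (a ∈ ·))
      (fun C => (univ : Finset (Finpartition (E \ C)))) (fun p => g (p.2.parts.card + 1))]
  refine Finset.sum_bij' (fun ρ _ => (⟨ρ.part a, pdel ρ (ρ.part_mem.2 ha)⟩ :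
      Σ C : Finset α, Finpartition (E \ C))) (fun q hq => pext ?_ ?_ q.2) ?_ ?_ ?_ ?_ ?_
  · have := (Finset.mem_sigma.1 hq).1
    rw [mem_filter] at this
    exact ⟨a, this.2⟩
  · have := (Finset.mem_sigma.1 hq).1
    rw [mem_filter, mem_powerset] at this
    exact this.1
  · intro ρ _
    rw [Finset.mem_sigma, mem_filter, mem_powerset]
    exact ⟨⟨ρ.le (ρ.part_mem.2 ha), ρ.mem_part ha⟩, mem_univ _⟩
  · intro q hq
    exact mem_univ _
  · intro ρ _
    exact pext_pdel ρ (ρ.part_mem.2 ha) _ _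
  · intro q hq
    have hm := (Finset.mem_sigma.1 hq).1
    rw [mem_filter, mem_powerset] at hm
    have hCne : q.1.Nonempty := ⟨a, hm.2⟩
    have hmem : q.1 ∈ (pext hCne hm.1 q.2).parts := by
      rw [pext_parts]; exact mem_insert_self _ _
    have hpart : (pext hCne hm.1 q.2).part a = q.1 :=
      Finpartition.part_eq_of_mem _ hmem hm.2
    refine Sigma.ext hpart ?_
    exact HEq.trans (pdel_heq _ ((pext hCne hm.1 q.2).part_mem.2 ha) hmem hpart)
      (heq_of_eq (pdel_pext hCne hm.1 q.2 hmem))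
  · intro ρ _
    simp only [pdel_parts]
    rw [Finset.card_erase_add_one (ρ.part_mem.2 ha)]

lemma sum_empty_partition {D : Finset α} (hD : D = ∅) (g : ℕ → ℝ) :
    ∑ ρ : Finpartition D, g ρ.parts.card = g 0 := by
  subst hD
  haveI : Unique (Finpartition (∅ : Finset α)) :=
    inferInstanceAs (Unique (Finpartition (⊥ : Finset α)))
  rw [Fintype.sum_unique]
  congr 1
  rw [Finset.card_eq_zero, Finpartition.parts_eq_empty_iff]
  rfl

lemma sum_powerset_real (E : Finset α) (hE : E.Nonempty) :
    ∑ C ∈ E.powerset, (-1 : ℝ) ^ C.card = 0 := by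
  have h := Finset.sum_powerset_neg_one_pow_card_of_nonempty (x := E) hE
  have h2 : ((∑ C ∈ E.powerset, (-1 : ℤ) ^ C.card : ℤ) : ℝ) = 0 := by rw [h]; norm_num
  rw [← h2]
  push_cast
  rfl

lemma neg_one_pow_eq {p q r : ℕ} (h : p + q = r) : (-1 : ℝ) ^ p = (-1) ^ r * (-1) ^ q := by
  have h2 : (-1 : ℝ) ^ q * (-1) ^ q = 1 := by rw [← mul_pow]; norm_num
  calc (-1 : ℝ) ^ p = (-1) ^ p * ((-1) ^ q * (-1) ^ q) := by rw [h2, mul_one]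
    _ = (-1) ^ (p + q) * (-1) ^ q := by rw [pow_add, mul_assoc]
    _ = (-1) ^ r * (-1) ^ q := by rw [h]

lemma Wlem : ∀ E : Finset α, E.Nonempty →
    ∑ ρ : Finpartition E, (-1 : ℝ) ^ (ρ.parts.card - 1) * (ρ.parts.card).factorial
      = (-1 : ℝ) ^ (E.card - 1) := by
  intro E
  induction E using Finset.strongInduction with
  | _ E ih =>
  intro hE
  have hEbot : E ≠ (⊥ : Finset α) := by simpa using hE.ne_empty
  have hstep : ∀ ρ : Finpartition E,
      (-1 : ℝ) ^ (ρ.parts.card - 1) * ((ρ.parts.card).factorial : ℝ)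
        = (ρ.parts.card : ℝ) *
          ((-1 : ℝ) ^ (ρ.parts.card - 1) * ((ρ.parts.card - 1).factorial : ℝ)) := by
    intro ρ
    have h1 : 0 < ρ.parts.card := Finset.card_pos.2 (ρ.parts_nonempty hEbot)
    rw [← Nat.mul_factorial_pred h1.ne']
    push_cast
    ring
  rw [Finset.sum_congr rfl fun ρ _ => hstep ρ,
    sum_marked E (fun r => (-1 : ℝ) ^ (r - 1) * ((r - 1).factorial : ℝ))]
  beta_reduce
  have hEmem : E ∈ E.powerset.erase ∅ := by
    rw [mem_erase, mem_powerset]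
    exact ⟨hE.ne_empty, Finset.Subset.refl E⟩
  rw [← Finset.add_sum_erase _ _ hEmem]
  have hfirst : (∑ ρ : Finpartition (E \ E),
      (-1 : ℝ) ^ (ρ.parts.card + 1 - 1) * ((ρ.parts.card + 1 - 1).factorial : ℝ)) = 1 := by
    have := sum_empty_partition (show E \ E = ∅ by simp)
      (fun r => (-1 : ℝ) ^ (r + 1 - 1) * ((r + 1 - 1).factorial : ℝ))
    simpa using this
  have hterm : ∀ C ∈ (E.powerset.erase ∅).erase E,
      (∑ ρ : Finpartition (E \ C),
        (-1 : ℝ) ^ (ρ.parts.card + 1 - 1) * ((ρ.parts.card + 1 - 1).factorial : ℝ))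
        = -((-1 : ℝ) ^ (E.card - 1) * (-1) ^ C.card) := by
    intro C hC
    rw [mem_erase] at hC
    obtain ⟨hCE, hC2⟩ := hC
    rw [mem_erase, mem_powerset] at hC2
    obtain ⟨hCne, hCsub⟩ := hC2
    have hD : (E \ C).Nonempty :=
      sdiff_nonempty.2 fun hEC => hCE (Finset.Subset.antisymm hCsub hEC)
    have hDss : E \ C ⊂ E := Finset.sdiff_ssubset hCsub (nonempty_iff_ne_empty.2 hCne)
    have hDbot : E \ C ≠ (⊥ : Finset α) := by simpa using hD.ne_empty
    have hstep2 : ∀ ρ : Finpartition (E \ C),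
        (-1 : ℝ) ^ (ρ.parts.card + 1 - 1) * ((ρ.parts.card + 1 - 1).factorial : ℝ)
          = -((-1 : ℝ) ^ (ρ.parts.card - 1) * ((ρ.parts.card).factorial : ℝ)) := by
      intro ρ
      have h1 : 0 < ρ.parts.card := Finset.card_pos.2 (ρ.parts_nonempty hDbot)
      obtain ⟨r, hr⟩ : ∃ r, ρ.parts.card = r + 1 :=
        ⟨ρ.parts.card - 1, (Nat.succ_pred_eq_of_pos h1).symm⟩
      rw [hr]
      simp [pow_succ]
    rw [Finset.sum_congr rfl fun ρ _ => hstep2 ρ, Finset.sum_neg_distrib,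
      ih (E \ C) hDss hD, card_sdiff_of_subset hCsub]
    have hjn : C.card < E.card := Finset.card_lt_card ⟨hCsub, fun h => hCE (Finset.Subset.antisymm hCsub h)⟩
    rw [neg_one_pow_eq (p := E.card - C.card - 1) (q := C.card) (r := E.card - 1) (by omega)]
  rw [hfirst, Finset.sum_congr rfl hterm, Finset.sum_neg_distrib, ← Finset.mul_sum]
  have hs : ∑ C ∈ (E.powerset.erase ∅).erase E, (-1 : ℝ) ^ C.card = -1 - (-1) ^ E.card := by
    rw [Finset.sum_erase_eq_sub hEmem,
      Finset.sum_erase_eq_sub (mem_powerset.2 (empty_subset E)), sum_powerset_real E hE]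
    simp
  rw [hs]
  have hn : E.card - 1 + 1 = E.card := Nat.succ_pred_eq_of_pos (Finset.card_pos.2 hE)
  have hx : (-1 : ℝ) ^ E.card = (-1) ^ (E.card - 1) * (-1) := by rw [← pow_succ, hn]
  have hxx : (-1 : ℝ) ^ (E.card - 1) * (-1) ^ (E.card - 1) = 1 := by rw [← mul_pow]; norm_num
  rw [hx]
  linear_combination (-1 : ℝ) * hxx

lemma Alem (E : Finset α) (hE : E.Nonempty) :
    ∑ ρ : Finpartition E, (-1 : ℝ) ^ (ρ.parts.card - 1) * ((ρ.parts.card - 1).factorial : ℝ)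
      = if E.card = 1 then 1 else 0 := by
  obtain ⟨a, ha⟩ := hE
  have hE : E.Nonempty := ⟨a, ha⟩
  rw [sum_part_at E a ha (fun r => (-1 : ℝ) ^ (r - 1) * ((r - 1).factorial : ℝ))]
  have hEmem : E ∈ E.powerset.filter (a ∈ ·) := by
    rw [mem_filter, mem_powerset]
    exact ⟨Finset.Subset.refl E, ha⟩
  rw [← Finset.add_sum_erase _ _ hEmem]
  have hfirst : (∑ ρ : Finpartition (E \ E),
      (-1 : ℝ) ^ (ρ.parts.card + 1 - 1) * ((ρ.parts.card + 1 - 1).factorial : ℝ)) = 1 := by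
    have := sum_empty_partition (show E \ E = ∅ by simp)
      (fun r => (-1 : ℝ) ^ (r + 1 - 1) * ((r + 1 - 1).factorial : ℝ))
    simpa using this
  have hterm : ∀ C ∈ (E.powerset.filter (a ∈ ·)).erase E,
      (∑ ρ : Finpartition (E \ C),
        (-1 : ℝ) ^ (ρ.parts.card + 1 - 1) * ((ρ.parts.card + 1 - 1).factorial : ℝ))
        = -((-1 : ℝ) ^ (E.card - 1) * (-1) ^ C.card) := by
    intro C hC
    rw [mem_erase] at hC
    obtain ⟨hCE, hC2⟩ := hC
    rw [mem_filter, mem_powerset] at hC2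
    obtain ⟨hCsub, haC⟩ := hC2
    have hCne : C.Nonempty := ⟨a, haC⟩
    have hD : (E \ C).Nonempty :=
      sdiff_nonempty.2 fun hEC => hCE (Finset.Subset.antisymm hCsub hEC)
    have hDbot : E \ C ≠ (⊥ : Finset α) := by simpa using hD.ne_empty
    have hstep2 : ∀ ρ : Finpartition (E \ C),
        (-1 : ℝ) ^ (ρ.parts.card + 1 - 1) * ((ρ.parts.card + 1 - 1).factorial : ℝ)
          = -((-1 : ℝ) ^ (ρ.parts.card - 1) * ((ρ.parts.card).factorial : ℝ)) := by
      intro ρ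
      have h1 : 0 < ρ.parts.card := Finset.card_pos.2 (ρ.parts_nonempty hDbot)
      obtain ⟨r, hr⟩ : ∃ r, ρ.parts.card = r + 1 :=
        ⟨ρ.parts.card - 1, (Nat.succ_pred_eq_of_pos h1).symm⟩
      rw [hr]
      simp [pow_succ]
    rw [Finset.sum_congr rfl fun ρ _ => hstep2 ρ, Finset.sum_neg_distrib,
      Wlem (E \ C) hD, card_sdiff_of_subset hCsub]
    have hjn : C.card < E.card :=
      Finset.card_lt_card ⟨hCsub, fun h => hCE (Finset.Subset.antisymm hCsub h)⟩
    rw [neg_one_pow_eq (p := E.card - C.card - 1) (q := C.card) (r := E.card - 1) (by omega)]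
  rw [hfirst, Finset.sum_congr rfl hterm, Finset.sum_neg_distrib, ← Finset.mul_sum]
  by_cases hcard : E.card = 1
  · rw [if_pos hcard]
    have hEa : E = {a} := by
      rw [Finset.card_eq_one] at hcard
      obtain ⟨b, hb⟩ := hcard
      rw [hb] at ha ⊢
      rw [Finset.mem_singleton] at ha
      rw [ha]
    have hempty : (E.powerset.filter (a ∈ ·)).erase E = ∅ := by
      rw [Finset.eq_empty_iff_forall_notMem]
      intro C hC
      rw [mem_erase, mem_filter, mem_powerset] at hC
      apply hC.1
      apply Finset.Subset.antisymm hC.2.1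
      rw [hEa]
      intro x hx
      rw [Finset.mem_singleton] at hx
      rw [hx]
      exact hC.2.2
    rw [hempty]
    simp
  · rw [if_neg hcard]
    have h2 : 2 ≤ E.card := by
      have := Finset.card_pos.2 hE
      omega
    -- compute the alternating sum over the filter
    have hfil : ∑ C ∈ E.powerset.filter (a ∈ ·), (-1 : ℝ) ^ C.card = 0 := by
      rw [Finset.sum_nbij' (i := fun C => C.erase a) (j := fun B => insert a B)
        (t := (E.erase a).powerset) (g := fun B => -((-1 : ℝ) ^ B.card))]
      · rw [Finset.sum_neg_distrib, sum_powerset_real _ ?_, neg_zero]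
        rw [← Finset.card_pos, Finset.card_erase_of_mem ha]
        omega
      · intro C hC
        rw [mem_filter, mem_powerset] at hC
        rw [mem_powerset]
        exact Finset.erase_subset_erase a hC.1
      · intro B hB
        rw [mem_powerset] at hB
        rw [mem_filter, mem_powerset]
        refine ⟨Finset.insert_subset ha (hB.trans (Finset.erase_subset a E)), mem_insert_self a B⟩
      · intro C hC
        rw [mem_filter] at hC
        exact Finset.insert_erase hC.2
      · intro B hB
        rw [mem_powerset] at hB
        apply Finset.erase_insert
        intro haB
        exact (Finset.notMem_erase a E) (hB haB)
      · intro C hC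
        rw [mem_filter] at hC
        rw [Finset.card_erase_of_mem hC.2]
        have h1 : 0 < C.card := Finset.card_pos.2 ⟨a, hC.2⟩
        obtain ⟨r, hr⟩ : ∃ r, C.card = r + 1 := ⟨C.card - 1, (Nat.succ_pred_eq_of_pos h1).symm⟩
        rw [hr]
        simp [pow_succ]
    have hs : ∑ C ∈ (E.powerset.filter (a ∈ ·)).erase E, (-1 : ℝ) ^ C.card = -(-1) ^ E.card := by
      rw [Finset.sum_erase_eq_sub hEmem, hfil]
      ring
    rw [hs]
    have hn : E.card - 1 + 1 = E.card := Nat.succ_pred_eq_of_pos (Finset.card_pos.2 hE)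
    have hx : (-1 : ℝ) ^ E.card = (-1) ^ (E.card - 1) * (-1) := by rw [← pow_succ, hn]
    have hxx : (-1 : ℝ) ^ (E.card - 1) * (-1) ^ (E.card - 1) = 1 := by rw [← mul_pow]; norm_num
    rw [hx]
    linear_combination (-1 : ℝ) * hxx

lemma sup_filter_subset {T : Finset α} (σ π : Finpartition T) (hle : σ ≤ π) {B : Finset α}
    (hB : B ∈ π.parts) : (σ.parts.filter (· ⊆ B)).sup id = B := by
  apply Finset.Subset.antisymm
  · intro x hx
    obtain ⟨C, hC, hxC⟩ := Finset.mem_sup.1 hx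
    exact (mem_filter.1 hC).2 hxC
  · intro x hxB
    have hxT : x ∈ T := π.le hB hxB
    obtain ⟨C, hC, hxC⟩ := σ.exists_mem hxT
    obtain ⟨B', hB', hCB'⟩ := hle hC
    have hBB : B' = B := π.eq_of_mem_parts hB' hB (hCB' hxC) hxB
    subst hBB
    exact Finset.mem_sup.2 ⟨C, mem_filter.2 ⟨hC, hCB'⟩, hxC⟩

/-- Restrict a refinement to one block. -/
def restr {T : Finset α} (σ π : Finpartition T) (hle : σ ≤ π) {B : Finset α}
    (hB : B ∈ π.parts) : Finpartition B :=
  σ.ofSubset (filter_subset (· ⊆ B) σ.parts) (sup_filter_subset σ π hle hB)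

@[simp] lemma restr_parts {T : Finset α} (σ π : Finpartition T) (hle : σ ≤ π) {B : Finset α}
    (hB : B ∈ π.parts) : (restr σ π hle hB).parts = σ.parts.filter (· ⊆ B) := rfl

lemma sum_refines {T : Finset α} (π : Finpartition T) (k : Finset α → ℝ) :
    ∏ B ∈ π.parts.attach, (∑ τ : Finpartition (B : Finset α), ∏ C ∈ τ.parts, k C)
      = ∑ σ ∈ univ.filter (· ≤ π), ∏ C ∈ σ.parts, k C := by
  rw [← Finset.univ_eq_attach, Finset.prod_univ_sum]
  rw [Fintype.piFinset_univ]
  refine Finset.sum_bij' (fun x _ => π.bind (fun B hB => x ⟨B, hB⟩))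
    (fun σ hσ => fun B => restr σ π (mem_filter.1 hσ).2 B.2) ?_ ?_ ?_ ?_ ?_
  · intro x _
    rw [mem_filter]
    refine ⟨mem_univ _, ?_⟩
    intro b hb
    rw [Finpartition.mem_bind] at hb
    obtain ⟨A, hA, hb⟩ := hb
    exact ⟨A, hA, (x ⟨A, hA⟩).le hb⟩
  · intro σ _
    exact mem_univ _
  · -- left inverse
    intro x _
    funext B
    apply Finpartition.ext
    rw [restr_parts]
    ext C
    rw [mem_filter, Finpartition.mem_bind]
    constructor
    · rintro ⟨⟨A, hA, hC⟩, hCB⟩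
      obtain ⟨y, hy⟩ := (x ⟨A, hA⟩).nonempty_of_mem_parts hC
      have hAB : A = (B : Finset α) :=
        π.eq_of_mem_parts hA B.2 ((x ⟨A, hA⟩).le hC hy) (hCB hy)
      subst hAB
      exact hC
    · intro hC
      exact ⟨⟨B.1, B.2, hC⟩, (x B).le hC⟩
  · -- right inverse
    intro σ hσ
    apply Finpartition.ext
    ext C
    rw [Finpartition.mem_bind]
    constructor
    · rintro ⟨A, hA, hC⟩
      rw [restr_parts] at hC
      exact (mem_filter.1 hC).1
    · intro hC
      obtain ⟨B', hB', hCB'⟩ := (mem_filter.1 hσ).2 hC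
      exact ⟨B', hB', by rw [restr_parts]; exact mem_filter.2 ⟨hC, hCB'⟩⟩
  · -- weights
    intro x _
    have hdisj : Set.PairwiseDisjoint (↑π.parts.attach)
        (fun A : {y // y ∈ π.parts} => (x A).parts) := by
      intro A hA A' hA' hAA
      simp only [Function.onFun]
      rw [Finset.disjoint_left]
      intro C hC hC'
      obtain ⟨y, hy⟩ := (x A).nonempty_of_mem_parts hC
      exact hAA (Subtype.ext (π.eq_of_mem_parts A.2 A'.2 ((x A).le hC hy) ((x A').le hC' hy)))
    calc ∏ B : {y // y ∈ π.parts}, ∏ C ∈ (x B).parts, k C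
        = ∏ B ∈ π.parts.attach, ∏ C ∈ (x B).parts, k C := by rw [Finset.univ_eq_attach]
      _ = ∏ C ∈ π.parts.attach.biUnion (fun A => (x A).parts), k C :=
          (Finset.prod_biUnion hdisj).symm
      _ = ∏ C ∈ (π.bind (fun B hB => x ⟨B, hB⟩)).parts, k C := rfl

/-- Group the blocks of `σ` according to the coarser partition `π`. -/
def grouping {T : Finset α} (σ π : Finpartition T) (hle : σ ≤ π) : Finpartition σ.parts where
  parts := π.parts.image (fun B => σ.parts.filter (· ⊆ B))
  supIndep := by
    rw [Finset.supIndep_iff_pairwiseDisjoint]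
    intro t ht u hu htu
    rw [Finset.mem_coe, mem_image] at ht hu
    obtain ⟨B, hB, rfl⟩ := ht
    obtain ⟨B', hB', rfl⟩ := hu
    simp only [Function.onFun, id_eq]
    rw [Finset.disjoint_left]
    intro C hCt hCu
    rw [mem_filter] at hCt hCu
    obtain ⟨x, hx⟩ := σ.nonempty_of_mem_parts hCt.1
    exact htu (by rw [π.eq_of_mem_parts hB hB' (hCt.2 hx) (hCu.2 hx)])
  sup_parts := by
    apply Finset.Subset.antisymm
    · intro C hC
      obtain ⟨v, hv, hCv⟩ := Finset.mem_sup.1 hC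
      rw [mem_image] at hv
      obtain ⟨B, hB, rfl⟩ := hv
      exact (mem_filter.1 hCv).1
    · intro C hC
      obtain ⟨B, hB, hCB⟩ := hle hC
      exact Finset.mem_sup.2
        ⟨σ.parts.filter (· ⊆ B), mem_image_of_mem _ hB, mem_filter.2 ⟨hC, hCB⟩⟩
  bot_notMem := by
    intro hmem
    rw [mem_image] at hmem
    obtain ⟨B, hB, hBempty⟩ := hmem
    have hne := (restr σ π hle hB).parts_nonempty (π.ne_bot hB)
    rw [restr_parts] at hne
    rw [hBempty] at hne
    simp at hne

@[simp] lemma grouping_parts {T : Finset α} (σ π : Finpartition T) (hle : σ ≤ π) :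
    (grouping σ π hle).parts = π.parts.image (fun B => σ.parts.filter (· ⊆ B)) := rfl

lemma grouping_card {T : Finset α} (σ π : Finpartition T) (hle : σ ≤ π) :
    (grouping σ π hle).parts.card = π.parts.card := by
  rw [grouping_parts]
  apply Finset.card_image_of_injOn
  intro B hB B' hB' heq
  rw [Finset.mem_coe] at hB hB'
  have hne := (restr σ π hle hB).parts_nonempty (π.ne_bot hB)
  rw [restr_parts] at hne
  obtain ⟨C, hC⟩ := hne
  rw [mem_filter] at hC
  have heq' : σ.parts.filter (· ⊆ B) = σ.parts.filter (· ⊆ B') := heq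
  have hC' : C ∈ σ.parts.filter (· ⊆ B') := heq' ▸ (mem_filter.2 hC)
  rw [mem_filter] at hC'
  obtain ⟨x, hx⟩ := σ.nonempty_of_mem_parts hC.1
  exact π.eq_of_mem_parts hB hB' (hC.2 hx) (hC'.2 hx)

def ungroup {T : Finset α} (σ : Finpartition T) (τ : Finpartition σ.parts) : Finpartition T where
  parts := τ.parts.image (fun t => t.sup id)
  supIndep := by
    rw [Finset.supIndep_iff_pairwiseDisjoint]
    intro x hx y hy hxy
    rw [Finset.mem_coe, mem_image] at hx hy
    obtain ⟨t, ht, rfl⟩ := hx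
    obtain ⟨u, hu, rfl⟩ := hy
    simp only [Function.onFun, id_eq]
    rw [Finset.disjoint_left]
    intro z hz1 hz2
    obtain ⟨C, hCt, hzC⟩ := Finset.mem_sup.1 hz1
    obtain ⟨C', hC'u, hzC'⟩ := Finset.mem_sup.1 hz2
    have hCσ : C ∈ σ.parts := τ.le ht hCt
    have hC'σ : C' ∈ σ.parts := τ.le hu hC'u
    have hCC : C = C' := σ.eq_of_mem_parts hCσ hC'σ hzC hzC'
    subst hCC
    have hdisj := τ.disjoint ht hu (fun hh => hxy (by rw [hh]))
    exact Finset.disjoint_left.1 hdisj hCt hC'u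
  sup_parts := by
    rw [Finset.sup_image]
    have h2 : τ.parts.sup (id ∘ fun t : Finset (Finset α) => t.sup id)
        = τ.parts.sup (fun t => (id t).sup id) := rfl
    rw [h2, ← Finset.sup_biUnion, τ.biUnion_parts, σ.sup_parts]
  bot_notMem := by
    intro hmem
    rw [mem_image] at hmem
    obtain ⟨t, ht, hsup⟩ := hmem
    obtain ⟨C, hCt⟩ := τ.nonempty_of_mem_parts ht
    have hCσ : C ∈ σ.parts := τ.le ht hCt
    obtain ⟨x, hx⟩ := σ.nonempty_of_mem_parts hCσ
    have hxt : x ∈ t.sup id := Finset.mem_sup.2 ⟨C, hCt, hx⟩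
    rw [hsup] at hxt
    simp at hxt

@[simp] lemma ungroup_parts {T : Finset α} (σ : Finpartition T) (τ : Finpartition σ.parts) :
    (ungroup σ τ).parts = τ.parts.image (fun t => t.sup id) := rfl

lemma ungroup_card {T : Finset α} (σ : Finpartition T) (τ : Finpartition σ.parts) :
    (ungroup σ τ).parts.card = τ.parts.card := by
  rw [ungroup_parts]
  apply Finset.card_image_of_injOn
  intro t ht u hu heq
  rw [Finset.mem_coe] at ht hu
  by_contra hne
  obtain ⟨C, hCt⟩ := τ.nonempty_of_mem_parts ht
  obtain ⟨x, hx⟩ := σ.nonempty_of_mem_parts (τ.le ht hCt)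
  have hxt : x ∈ t.sup id := Finset.mem_sup.2 ⟨C, hCt, hx⟩
  have heq' : t.sup id = u.sup id := heq
  have hxu : x ∈ u.sup id := heq' ▸ hxt
  obtain ⟨C', hC'u, hxC'⟩ := Finset.mem_sup.1 hxu
  have hCC : C = C' := σ.eq_of_mem_parts (τ.le ht hCt) (τ.le hu hC'u) hx hxC'
  subst hCC
  exact Finset.disjoint_left.1 (τ.disjoint ht hu hne) hCt hC'u

lemma le_ungroup {T : Finset α} (σ : Finpartition T) (τ : Finpartition σ.parts) :
    σ ≤ ungroup σ τ := by
  intro C hC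
  obtain ⟨t, ht, hCt⟩ := τ.exists_mem hC
  exact ⟨t.sup id, mem_image_of_mem _ ht, Finset.le_sup (f := id) hCt⟩

lemma ungroup_grouping {T : Finset α} (σ π : Finpartition T) (hle : σ ≤ π) :
    ungroup σ (grouping σ π hle) = π := by
  apply Finpartition.ext
  rw [ungroup_parts, grouping_parts, Finset.image_image]
  have himg : π.parts.image (fun B => (σ.parts.filter (· ⊆ B)).sup id) = π.parts.image id :=
    Finset.image_congr (fun B hB => sup_filter_subset σ π hle (by rwa [Finset.mem_coe] at hB))
  rw [show ((fun t : Finset (Finset α) => t.sup id) ∘ fun B => σ.parts.filter (· ⊆ B))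
      = fun B => (σ.parts.filter (· ⊆ B)).sup id from rfl, himg, Finset.image_id]

lemma grouping_ungroup {T : Finset α} (σ : Finpartition T) (τ : Finpartition σ.parts)
    (hle : σ ≤ ungroup σ τ) : grouping σ (ungroup σ τ) hle = τ := by
  apply Finpartition.ext
  rw [grouping_parts, ungroup_parts, Finset.image_image]
  rw [show ((fun B => σ.parts.filter (· ⊆ B)) ∘ fun t : Finset (Finset α) => t.sup id)
      = fun t : Finset (Finset α) => σ.parts.filter (· ⊆ t.sup id) from rfl]
  have key : ∀ t ∈ τ.parts, σ.parts.filter (· ⊆ t.sup id) = t := by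
    intro t ht
    ext C
    rw [mem_filter]
    constructor
    · rintro ⟨hCσ, hCsup⟩
      obtain ⟨x, hx⟩ := σ.nonempty_of_mem_parts hCσ
      obtain ⟨C', hC't, hxC'⟩ := Finset.mem_sup.1 (hCsup hx)
      have hCC : C = C' := σ.eq_of_mem_parts hCσ (τ.le ht hC't) hx hxC'
      subst hCC
      exact hC't
    · intro hCt
      exact ⟨τ.le ht hCt, Finset.le_sup (f := id) hCt⟩
  have himg : τ.parts.image (fun t => σ.parts.filter (· ⊆ t.sup id)) = τ.parts.image id :=
    Finset.image_congr (fun t ht => key t (by rwa [Finset.mem_coe] at ht))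
  rw [himg, Finset.image_id]

lemma sum_coarsen {T : Finset α} (σ : Finpartition T) (g : ℕ → ℝ) :
    ∑ π ∈ univ.filter (fun π => σ ≤ π), g π.parts.card
      = ∑ τ : Finpartition σ.parts, g τ.parts.card := by
  refine Finset.sum_bij' (fun π hπ => grouping σ π (mem_filter.1 hπ).2)
    (fun τ _ => ungroup σ τ) (fun π hπ => mem_univ _)
    (fun τ _ => mem_filter.2 ⟨mem_univ _, le_ungroup σ τ⟩) ?_ ?_ ?_
  · intro π hπ
    exact ungroup_grouping σ π (mem_filter.1 hπ).2
  · intro τ _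
    exact grouping_ungroup σ τ _
  · intro π hπ
    rw [grouping_card]

end MCaux

open MCaux in
theorem cumulant_moebius_inversion {α : Type*} [DecidableEq α] (S : Finset α)
    (hS : S.Nonempty) (m k : Finset α → ℝ)
    (h : ∀ T ⊆ S, T.Nonempty → m T = ∑ π : Finpartition T, ∏ B ∈ π.parts, k B) :
    ∀ T ⊆ S, T.Nonempty →
      k T = ∑ π : Finpartition T,
        (-1 : ℝ) ^ (π.parts.card - 1) * (π.parts.card - 1).factorial *
          ∏ B ∈ π.parts, m B := by
  intro T hTS hT
  have hTbot : T ≠ (⊥ : Finset α) := by simpa using hT.ne_empty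
  have step1 : ∀ π : Finpartition T, ∏ B ∈ π.parts, m B
      = ∑ σ ∈ univ.filter (· ≤ π), ∏ C ∈ σ.parts, k C := by
    intro π
    rw [← sum_refines π k, ← Finset.prod_attach π.parts m]
    apply Finset.prod_congr rfl
    intro B _
    exact h B.1 ((π.le B.2).trans hTS) (π.nonempty_of_mem_parts B.2)
  have main : ∑ π : Finpartition T,
      (-1 : ℝ) ^ (π.parts.card - 1) * ((π.parts.card - 1).factorial : ℝ) * ∏ B ∈ π.parts, m B
        = k T := by
    calc ∑ π : Finpartition T,
        (-1 : ℝ) ^ (π.parts.card - 1) * ((π.parts.card - 1).factorial : ℝ) * ∏ B ∈ π.parts, m B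
        = ∑ π : Finpartition T, ∑ σ ∈ univ.filter (· ≤ π),
            (-1 : ℝ) ^ (π.parts.card - 1) * ((π.parts.card - 1).factorial : ℝ) *
              ∏ C ∈ σ.parts, k C := by
          apply Finset.sum_congr rfl
          intro π _
          rw [step1 π, Finset.mul_sum]
      _ = ∑ σ : Finpartition T, ∑ π ∈ univ.filter (fun π => σ ≤ π),
            (-1 : ℝ) ^ (π.parts.card - 1) * ((π.parts.card - 1).factorial : ℝ) *
              ∏ C ∈ σ.parts, k C := by
          simp_rw [Finset.sum_filter]
          exact Finset.sum_comm
      _ = ∑ σ : Finpartition T, (∑ π ∈ univ.filter (fun π => σ ≤ π),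
            (-1 : ℝ) ^ (π.parts.card - 1) * ((π.parts.card - 1).factorial : ℝ)) *
              ∏ C ∈ σ.parts, k C := by
          apply Finset.sum_congr rfl
          intro σ _
          rw [Finset.sum_mul]
      _ = ∑ σ : Finpartition T, (if σ.parts.card = 1 then (1 : ℝ) else 0) *
              ∏ C ∈ σ.parts, k C := by
          apply Finset.sum_congr rfl
          intro σ _
          congr 1
          have h1 := sum_coarsen σ (fun r => (-1 : ℝ) ^ (r - 1) * ((r - 1).factorial : ℝ))
          have h2 := Alem σ.parts (σ.parts_nonempty hTbot)
          exact h1.trans h2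
      _ = k T := by
          have hside : ∀ σ ∈ (univ : Finset (Finpartition T)),
              σ ≠ Finpartition.indiscrete hTbot →
              (if σ.parts.card = 1 then (1 : ℝ) else 0) * ∏ C ∈ σ.parts, k C = 0 := by
            intro σ _ hne
            rcases eq_or_ne σ.parts.card 1 with hc | hc
            · exfalso
              apply hne
              apply Finpartition.ext
              rw [Finset.card_eq_one] at hc
              obtain ⟨t, hter⟩ := hc
              have hts : t = T := by
                have h3 := σ.sup_parts
                rw [hter] at h3
                simpa using h3
              rw [hter, hts]
              rfl
            · rw [if_neg hc, zero_mul]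
          rw [Finset.sum_eq_single_of_mem (Finpartition.indiscrete hTbot) (mem_univ _) hside]
          have hparts : (Finpartition.indiscrete hTbot).parts = {T} := rfl
          rw [hparts]
          simp
  exact main.symm
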